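/- Let μ_F > 0 and F* > 0, and suppose F : [0,∞) → ℝ is twice continuously differentiable, satisfies 0 ≤ F ≤ F*, F(0) = 0, F(x) → F* as x → ∞, and -F''(x) ≤ μ_F (F* - F(x)) for all x > 0. Then F(x) ≤ F*(1 - e^{-√μ_F x}) for all x ≥ 0. -/

import Mathlib

open Filter Topology Set

theorem stmt3 (μF Fstar : ℝ) (hμ : 0 < μF) (hF : 0 < Fstar)
    (F : ℝ → ℝ) (hreg : ContDiff ℝ 2 F)
    (hbound : ∀ x ≥ 0, 0 ≤ F x ∧ F x ≤ Fstar)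
    (h0 : F 0 = 0)
    (hlim : Tendsto F atTop (𝓝 Fstar))
    (hsub : ∀ x > 0, -(deriv (deriv F)) x ≤ μF * (Fstar - F x)) :
    ∀ x ≥ 0, F x ≤ Fstar * (1 - Real.exp (-(Real.sqrt μF) * x)) := by
  by_contra hcon
  push_neg at hcon
  obtain ⟨x₀, hx₀, hx₀'⟩ := hcon
  set s : ℝ := Real.sqrt μF with hs_def
  have hs : 0 < s := Real.sqrt_pos.mpr hμ
  have hs2 : s * s = μF := Real.mul_self_sqrt hμ.le
  have hexp : ∀ x : ℝ, HasDerivAt (fun y => Real.exp (-s * y)) (Real.exp (-s * x) * (-s)) x := by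
    intro x
    have h1 : HasDerivAt (fun y : ℝ => -s * y) (-s) x := by
      simpa using (hasDerivAt_id x).const_mul (-s)
    exact (Real.hasDerivAt_exp (-s * x)).comp x h1
  have hg1 : ∀ x : ℝ, HasDerivAt (fun y => Fstar * (1 - Real.exp (-s * y)))
      (Fstar * (s * Real.exp (-s * x))) x := by
    intro x
    have h := ((hasDerivAt_const x (1 : ℝ)).sub (hexp x)).const_mul Fstar
    refine h.congr_deriv ?_
    ring
  have hg2 : ∀ x : ℝ, HasDerivAt (fun y => Fstar * (s * Real.exp (-s * y)))
      (-(μF * (Fstar * Real.exp (-s * x)))) x := by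
    intro x
    have h := ((hexp x).const_mul s).const_mul Fstar
    refine h.congr_deriv ?_
    rw [← hs2]; ring
  have hF1 : Differentiable ℝ F := hreg.differentiable (by norm_num)
  have hF'c : ContDiff ℝ 1 (deriv F) := by
    have h2 : ContDiff ℝ (1 + 1) F := by
      have : ((1 : WithTop ℕ∞) + 1) = 2 := by norm_num
      rw [this]; exact hreg
    exact (contDiff_succ_iff_deriv.mp h2).2.2
  have hF'd : Differentiable ℝ (deriv F) := hF'c.differentiable one_ne_zero
  set w : ℝ → ℝ := fun x => F x - Fstar * (1 - Real.exp (-s * x)) with hw_def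
  have hw_cont : Continuous w := hreg.continuous.sub (by fun_prop)
  have hw0 : w 0 = 0 := by simp [hw_def, h0]
  have hw' : ∀ x, HasDerivAt w (deriv F x - Fstar * (s * Real.exp (-s * x))) x := fun x =>
    ((hF1 x).hasDerivAt).sub (hg1 x)
  have hwderiv : deriv w = fun x => deriv F x - Fstar * (s * Real.exp (-s * x)) :=
    funext fun x => (hw' x).deriv
  have hw'' : ∀ x, deriv (deriv w) x = deriv (deriv F) x - -(μF * (Fstar * Real.exp (-s * x))) := by
    intro x
    rw [hwderiv]
    exact (((hF'd x).hasDerivAt).sub (hg2 x)).deriv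
  -- limit of w at infinity
  have hexp0 : Tendsto (fun x : ℝ => Real.exp (-s * x)) atTop (𝓝 0) := by
    have h1 : Tendsto (fun x : ℝ => s * x) atTop atTop :=
      tendsto_id.const_mul_atTop hs
    have h2 := Real.tendsto_exp_neg_atTop_nhds_zero.comp h1
    exact h2.congr fun x => by simp [Function.comp, neg_mul]
  have hglim : Tendsto (fun x => Fstar * (1 - Real.exp (-s * x))) atTop (𝓝 Fstar) := by
    have h1 : Tendsto (fun _ : ℝ => (1 : ℝ)) atTop (𝓝 1) := tendsto_const_nhds
    have h := (h1.sub hexp0).const_mul Fstar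
    have h2 : Fstar * ((1 : ℝ) - 0) = Fstar := by ring
    rwa [h2] at h
  have hwlim : Tendsto w atTop (𝓝 0) := by
    have h := hlim.sub hglim
    rwa [sub_self] at h
  have hwx₀ : 0 < w x₀ := by
    have : w x₀ = F x₀ - Fstar * (1 - Real.exp (-s * x₀)) := rfl
    rw [this]; linarith
  -- find M beyond which w is small
  obtain ⟨M, hM⟩ := (hwlim.eventually_lt_const (by linarith : (0:ℝ) < w x₀ / 2)).exists_forall_of_atTop
  set M' : ℝ := max M x₀ with hM'_def
  have hM'0 : 0 ≤ M' := le_trans hx₀ (le_max_right _ _)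
  obtain ⟨c, hc_mem, hc_max⟩ := isCompact_Icc.exists_isMaxOn (nonempty_Icc.mpr hM'0)
    hw_cont.continuousOn
  have hcx₀ : w x₀ ≤ w c := hc_max ⟨hx₀, le_max_right _ _⟩
  have hwc : 0 < w c := lt_of_lt_of_le hwx₀ hcx₀
  have hc0 : 0 < c := by
    rcases lt_or_eq_of_le hc_mem.1 with h | h
    · exact h
    · rw [← h, hw0] at hwc; exact absurd hwc (lt_irrefl 0)
  have hcM' : c < M' := by
    rcases lt_or_eq_of_le hc_mem.2 with h | h
    · exact h
    · exfalso
      have h2 : w M' < w x₀ / 2 := hM M' (le_max_left _ _)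
      rw [← h] at h2
      have h3 : w x₀ < w x₀ / 2 := lt_of_le_of_lt hcx₀ h2
      exact absurd h3 (not_lt.mpr (half_le_self hwx₀.le))
  have hlocal : IsLocalMax w c := hc_max.isLocalMax (Icc_mem_nhds hc0 hcM')
  have hd0 : deriv w c = 0 := hlocal.deriv_eq_zero
  -- find δ
  have hev : ∀ᶠ y in 𝓝 c, 0 < w y :=
    (hw_cont.continuousAt).eventually_const_lt hwc
  obtain ⟨ε, hε, hball⟩ := Metric.eventually_nhds_iff.mp hev
  set δ : ℝ := min (ε / 2) (M' - c) with hδ_def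
  have hδ : 0 < δ := lt_min (by linarith) (by linarith)
  have hwpos : ∀ y ∈ Icc c (c + δ), 0 < w y := by
    intro y hy
    apply hball
    rw [Real.dist_eq, abs_of_nonneg (by linarith [hy.1])]
    have : δ ≤ ε / 2 := min_le_left _ _
    linarith [hy.2]
  have hcδM' : c + δ ≤ M' := by
    have : δ ≤ M' - c := min_le_right _ _
    linarith
  -- deriv (deriv w) > 0 on Ioo c (c+δ)
  have hkey : ∀ x ∈ Ioo c (c + δ), 0 < deriv (deriv w) x := by
    intro x hx
    have hx0 : 0 < x := lt_trans hc0 hx.1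
    have hwx : 0 < w x := hwpos x ⟨hx.1.le, hx.2.le⟩
    have hsubx := hsub x hx0
    rw [hw'' x]
    have hwexp : w x = F x - Fstar * (1 - Real.exp (-s * x)) := rfl
    rw [hwexp] at hwx
    nlinarith [hwx, hsubx]
  -- deriv w strictly increasing on Icc c (c+δ)
  have hwdcont : Continuous (deriv w) := by
    rw [hwderiv]; exact hF'c.continuous.sub (by fun_prop)
  have hmono1 : StrictMonoOn (deriv w) (Icc c (c + δ)) := by
    apply strictMonoOn_of_deriv_pos (convex_Icc _ _) hwdcont.continuousOn
    intro x hx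
    rw [interior_Icc] at hx
    exact hkey x hx
  have hdpos : ∀ x ∈ Ioo c (c + δ), 0 < deriv w x := by
    intro x hx
    have h := hmono1 ⟨le_refl c, by linarith⟩ ⟨hx.1.le, hx.2.le⟩ hx.1
    rwa [hd0] at h
  have hmono2 : StrictMonoOn w (Icc c (c + δ)) := by
    apply strictMonoOn_of_deriv_pos (convex_Icc _ _) hw_cont.continuousOn
    intro x hx
    rw [interior_Icc] at hx
    exact hdpos x hx
  have hlt : w c < w (c + δ) :=
    hmono2 ⟨le_refl c, by linarith⟩ ⟨by linarith, le_refl _⟩ (by linarith)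
  have hle : w (c + δ) ≤ w c := hc_max ⟨by linarith, by linarith⟩
  linarith
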